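/- Let V be a topological space, let G be a topological group, and let h : C(V,G) → G be a group homomorphism such that h(c_g) = g for every g ∈ G, where c_g denotes the constant map with value g, and such that h(x) ≠ 1 for every x ∈ C(V,G) with x(v) ≠ 1 for all v ∈ V. Then h is range decreasing, i.e. h(x) ∈ x(V) for every x ∈ C(V,G). -/

import Mathlib

open ContinuousMap

/-- If `h : C(V,G) → G` is a group homomorphism fixing the constant maps
(`h c_g = g`) and such that `h x ≠ 1` whenever `x` omits the value `1`, then `h` is range
decreasing: `h x ∈ x(V)` for every `x`. -/
theorem rangeDecreasing_of_fixes_constants {V G : Type*} [TopologicalSpace V]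
    [TopologicalSpace G] [Group G] [IsTopologicalGroup G]
    (h : C(V, G) →* G)
    (hconst : ∀ g : G, h (ContinuousMap.const V g) = g)
    (hne : ∀ x : C(V, G), (∀ v : V, x v ≠ 1) → h x ≠ 1) :
    ∀ x : C(V, G), h x ∈ Set.range ⇑x := by
  intro x
  by_contra hmem
  have key : ∀ v : V, (x * ContinuousMap.const V (h x)⁻¹) v ≠ 1 := by
    intro v hv
    simp only [ContinuousMap.mul_apply, ContinuousMap.const_apply] at hv
    exact hmem ⟨v, by rwa [mul_inv_eq_one] at hv⟩
  have := hne _ key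
  apply this
  rw [map_mul, hconst]
  group
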